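/- For every natural number N ≥ 1, the matrix inequality 2·W²_GHZ ⪰ W_GHZ holds, i.e. the Hermitian matrix ((3/2)·I − P₁ − P₂) − ((1/2)·I − |GHZ⟩⟨GHZ|) = I − P₁ − P₂ + |GHZ⟩⟨GHZ| is positive semidefinite, where P₁ = (I + σx^{⊗N})/2, P₂ = |0^N⟩⟨0^N| + |1^N⟩⟨1^N|, W²_GHZ = (3/4)·I − (P₁ + P₂)/2, W_GHZ = (1/2)·I − |GHZ⟩⟨GHZ|, and |GHZ⟩ = (|0^N⟩ + |1^N⟩)/√2. -/

import Mathlib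

open Matrix Complex ComplexOrder

noncomputable section

/-- Pauli X matrix. -/
def pX : Matrix (Fin 2) (Fin 2) ℂ := !![0, 1; 1, 0]

/-- N-fold Kronecker (tensor) power of a single-qubit operator. -/
def tensorPow (N : ℕ) (A : Matrix (Fin 2) (Fin 2) ℂ) :
    Matrix (Fin N → Fin 2) (Fin N → Fin 2) ℂ :=
  Matrix.of fun b c => ∏ j, A (b j) (c j)

/-- The all-zeros bit string, indexing `|0^N⟩`. -/
def zeros (N : ℕ) : Fin N → Fin 2 := fun _ => 0

/-- The all-ones bit string, indexing `|1^N⟩`. -/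
def ones (N : ℕ) : Fin N → Fin 2 := fun _ => 1

/-- The GHZ state `(|0^N⟩ + |1^N⟩)/√2`. -/
def ghz (N : ℕ) : (Fin N → Fin 2) → ℂ := fun b =>
  ((Real.sqrt 2 : ℂ))⁻¹ * ((if b = zeros N then 1 else 0) + (if b = ones N then 1 else 0))

/-- The rank-one projector `|ψ⟩⟨ψ|` of a vector `ψ`. -/
def proj (N : ℕ) (ψ : (Fin N → Fin 2) → ℂ) :
    Matrix (Fin N → Fin 2) (Fin N → Fin 2) ℂ :=
  Matrix.of fun b c => ψ b * (starRingEnd ℂ) (ψ c)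

/-- `P₁ = (I + σx^{⊗N})/2`. -/
def P1 (N : ℕ) : Matrix (Fin N → Fin 2) (Fin N → Fin 2) ℂ :=
  ((1 : ℂ) / 2) • ((1 : Matrix (Fin N → Fin 2) (Fin N → Fin 2) ℂ) + tensorPow N pX)

/-- `P₂ = |0^N⟩⟨0^N| + |1^N⟩⟨1^N|`. -/
def P2 (N : ℕ) : Matrix (Fin N → Fin 2) (Fin N → Fin 2) ℂ :=
  Matrix.single (zeros N) (zeros N) (1 : ℂ)
    + Matrix.single (ones N) (ones N) (1 : ℂ)

/-- The fidelity witness `W_GHZ = (1/2)·I − |GHZ⟩⟨GHZ|`. -/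
def Wghz (N : ℕ) : Matrix (Fin N → Fin 2) (Fin N → Fin 2) ℂ :=
  ((1 : ℂ) / 2) • (1 : Matrix (Fin N → Fin 2) (Fin N → Fin 2) ℂ) - proj N (ghz N)

/-- The two-setting witness `W²_GHZ = (3/4)·I − (P₁ + P₂)/2`. -/
def W2ghz (N : ℕ) : Matrix (Fin N → Fin 2) (Fin N → Fin 2) ℂ :=
  ((3 : ℂ) / 4) • (1 : Matrix (Fin N → Fin 2) (Fin N → Fin 2) ℂ)
    - ((1 : ℂ) / 2) • (P1 N + P2 N)

lemma tensorPow_mul (N : ℕ) (A B : Matrix (Fin 2) (Fin 2) ℂ) :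
    tensorPow N A * tensorPow N B = tensorPow N (A * B) := by
  ext b c
  simp only [tensorPow, Matrix.mul_apply, Matrix.of_apply]
  rw [Finset.prod_univ_sum, Fintype.piFinset_univ]
  exact Finset.sum_congr rfl fun d _ => (Finset.prod_mul_distrib).symm
lemma tensorPow_one (N : ℕ) : tensorPow N (1 : Matrix (Fin 2) (Fin 2) ℂ) = 1 := by
  ext b c
  simp [tensorPow, Matrix.one_apply, Finset.prod_boole, funext_iff]
lemma pX_mul_pX : pX * pX = 1 := by
  ext i j
  fin_cases i <;> fin_cases j <;> simp [pX, Matrix.mul_apply, Fin.sum_univ_two, Matrix.one_apply]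
lemma pX_apply (x y : Fin 2) : pX x y = if x = y then 0 else 1 := by
  fin_cases x <;> fin_cases y <;> simp [pX]
lemma X_apply (N : ℕ) (b c : Fin N → Fin 2) :
    tensorPow N pX b c = if (∀ j, b j ≠ c j) then 1 else 0 := by
  have h : ∀ j : Fin N, pX (b j) (c j) = if b j ≠ c j then (1:ℂ) else 0 := by
    intro j; rw [pX_apply]; by_cases h : b j = c j <;> simp [h]
  simp only [tensorPow, Matrix.of_apply]
  simp_rw [h]
  rw [Fintype.prod_boole]
  split_ifs <;> rfl
lemma zeros_ne_ones {N : ℕ} (hN : 1 ≤ N) : zeros N ≠ ones N := fun h => by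
  have := congrFun h ⟨0, hN⟩
  simp [zeros, ones] at this
lemma X_mul_Ez (N : ℕ) :
    tensorPow N pX * Matrix.single (zeros N) (zeros N) (1:ℂ)
      = Matrix.single (ones N) (zeros N) 1 := by
  ext b c
  by_cases hc : c = zeros N
  · subst hc
    rw [Matrix.mul_single_apply_same, X_apply, mul_one]
    by_cases hb : b = ones N
    · subst hb
      simp [Matrix.single, zeros, ones]
    · rw [if_neg (fun hall => hb (funext fun j => by
        have := hall j; revert this; simp [zeros, ones]; omega))]
      simp [Matrix.single, Ne.symm hb]
  · rw [Matrix.mul_single_apply_of_ne (hbj := hc)]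
    simp [Matrix.single, Ne.symm hc]
lemma X_mul_Eo (N : ℕ) :
    tensorPow N pX * Matrix.single (ones N) (ones N) (1:ℂ)
      = Matrix.single (zeros N) (ones N) 1 := by
  ext b c
  by_cases hc : c = ones N
  · subst hc
    rw [Matrix.mul_single_apply_same, X_apply, mul_one]
    by_cases hb : b = zeros N
    · subst hb
      simp [Matrix.single, zeros, ones]
    · rw [if_neg (fun hall => hb (funext fun j => by
        have := hall j; revert this; simp [zeros, ones]; omega))]
      simp [Matrix.single, Ne.symm hb]
  · rw [Matrix.mul_single_apply_of_ne (hbj := hc)]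
    simp [Matrix.single, Ne.symm hc]
lemma Ez_mul_X (N : ℕ) :
    Matrix.single (zeros N) (zeros N) (1:ℂ) * tensorPow N pX
      = Matrix.single (zeros N) (ones N) 1 := by
  ext b c
  by_cases hb : b = zeros N
  · subst hb
    rw [Matrix.single_mul_apply_same, X_apply, one_mul]
    by_cases hc : c = ones N
    · subst hc
      simp [Matrix.single, zeros, ones]
    · rw [if_neg (fun hall => hc (funext fun j => by
        have := hall j; revert this; simp [zeros, ones]; omega))]
      simp [Matrix.single, Ne.symm hc]
  · rw [Matrix.single_mul_apply_of_ne (h := hb)]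
    simp [Matrix.single, Ne.symm hb]
lemma Eo_mul_X (N : ℕ) :
    Matrix.single (ones N) (ones N) (1:ℂ) * tensorPow N pX
      = Matrix.single (ones N) (zeros N) 1 := by
  ext b c
  by_cases hb : b = ones N
  · subst hb
    rw [Matrix.single_mul_apply_same, X_apply, one_mul]
    by_cases hc : c = zeros N
    · subst hc
      simp [Matrix.single, zeros, ones]
    · rw [if_neg (fun hall => hc (funext fun j => by
        have := hall j; revert this; simp [zeros, ones]; omega))]
      simp [Matrix.single, Ne.symm hc]
  · rw [Matrix.single_mul_apply_of_ne (h := hb)]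
    simp [Matrix.single, Ne.symm hb]
lemma proj_ghz_eq (N : ℕ) :
    proj N (ghz N) = ((1:ℂ)/2) •
      (Matrix.single (zeros N) (zeros N) (1:ℂ)
        + Matrix.single (zeros N) (ones N) 1
        + Matrix.single (ones N) (zeros N) 1
        + Matrix.single (ones N) (ones N) 1) := by
  have h2 : ((Real.sqrt 2 : ℂ))⁻¹ * ((Real.sqrt 2 : ℂ))⁻¹ = 1/2 := by
    rw [← mul_inv, ← Complex.ofReal_mul, Real.mul_self_sqrt (by norm_num)]
    norm_num
  ext b c
  simp only [proj, ghz, Matrix.of_apply, Matrix.smul_apply, Matrix.add_apply,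
    Matrix.single, _root_.map_mul, map_add, smul_eq_mul, map_inv₀,
    Complex.conj_ofReal, apply_ite (starRingEnd ℂ), _root_.map_one, map_zero]
  rw [show ((Real.sqrt 2 : ℂ))⁻¹ * ((if b = zeros N then (1:ℂ) else 0) + if b = ones N then 1 else 0) *
      (((Real.sqrt 2 : ℂ))⁻¹ *
        ((if c = zeros N then (1:ℂ) else 0) + if c = ones N then 1 else 0))
      = (((Real.sqrt 2 : ℂ))⁻¹ * ((Real.sqrt 2 : ℂ))⁻¹) *
        (((if b = zeros N then (1:ℂ) else 0) + if b = ones N then 1 else 0) *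
          ((if c = zeros N then (1:ℂ) else 0) + if c = ones N then 1 else 0)) from by ring,
    h2]
  congr 1
  by_cases h1 : b = zeros N <;> by_cases h2 : b = ones N <;>
    by_cases h3 : c = zeros N <;> by_cases h4 : c = ones N <;>
    simp_all [eq_comm] <;> ring
lemma X_conjT (N : ℕ) : (tensorPow N pX)ᴴ = tensorPow N pX := by
  ext b c
  simp [Matrix.conjTranspose_apply, tensorPow, star_prod, pX_apply,
    apply_ite (star : ℂ → ℂ), eq_comm]

theorem two_setting_witness_dominates (N : ℕ) (hN : 1 ≤ N) :
    ((2 : ℂ) • W2ghz N - Wghz N).PosSemidef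
    ∧ ((1 : Matrix (Fin N → Fin 2) (Fin N → Fin 2) ℂ)
        - P1 N - P2 N + proj N (ghz N)).PosSemidef := by
  have hzo := zeros_ne_ones hN
  set A := P1 N with hA
  set B := P2 N with hB
  set P := proj N (ghz N) with hP
  have hX2 : tensorPow N pX * tensorPow N pX = 1 := by
    rw [tensorPow_mul, pX_mul_pX, tensorPow_one]
  have hA2 : A * A = A := by
    show (((1:ℂ)/2) • (1 + tensorPow N pX)) * (((1:ℂ)/2) • (1 + tensorPow N pX))
        = ((1:ℂ)/2) • (1 + tensorPow N pX)
    rw [Matrix.smul_mul, Matrix.mul_smul, add_mul, one_mul, mul_add, mul_one, hX2]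
    module
  have hB2 : B * B = B := by
    show (Matrix.single (zeros N) (zeros N) (1:ℂ)
        + Matrix.single (ones N) (ones N) (1:ℂ))
      * (Matrix.single (zeros N) (zeros N) (1:ℂ)
        + Matrix.single (ones N) (ones N) (1:ℂ)) = _
    rw [add_mul, mul_add, mul_add, Matrix.single_mul_single_same,
      Matrix.single_mul_single_same, Matrix.single_mul_single_of_ne (h := hzo),
      Matrix.single_mul_single_of_ne (h := Ne.symm hzo)]
    simp
    rfl
  have hAB : A * B = P := by
    show (((1:ℂ)/2) • (1 + tensorPow N pX))
      * (Matrix.single (zeros N) (zeros N) (1:ℂ)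
        + Matrix.single (ones N) (ones N) (1:ℂ)) = P
    rw [Matrix.smul_mul, mul_add, add_mul, add_mul, one_mul, one_mul, X_mul_Ez, X_mul_Eo,
      hP, proj_ghz_eq]
    module
  have hBA : B * A = P := by
    show (Matrix.single (zeros N) (zeros N) (1:ℂ)
        + Matrix.single (ones N) (ones N) (1:ℂ))
      * (((1:ℂ)/2) • (1 + tensorPow N pX)) = P
    rw [Matrix.mul_smul, add_mul, mul_add, mul_add, mul_one, mul_one, Ez_mul_X, Eo_mul_X,
      hP, proj_ghz_eq]
    module
  have hPA : P * A = P := by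
    calc P * A = A * (B * A) := by rw [← hAB, mul_assoc]
    _ = (A * A) * B := by rw [hBA, ← hAB, ← mul_assoc]
    _ = P := by rw [hA2, hAB]
  have hPB : P * B = P := by
    calc P * B = A * (B * B) := by rw [← hAB, mul_assoc]
    _ = P := by rw [hB2, hAB]
  set C := (1 : Matrix (Fin N → Fin 2) (Fin N → Fin 2) ℂ) - A - B + P with hC
  have hCB : C * B = 0 := by
    rw [hC, add_mul, sub_mul, sub_mul, one_mul, hAB, hB2, hPB]
    abel
  have hCA : C * A = 0 := by
    rw [hC, add_mul, sub_mul, sub_mul, one_mul, hA2, hBA, hPA]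
    abel
  have hfac : (1 - A) * (1 - B) = C := by
    rw [hC, mul_sub, mul_one, sub_mul, one_mul, hAB]
    abel
  have hAH : Aᴴ = A := by
    show (((1:ℂ)/2) • (1 + tensorPow N pX))ᴴ = ((1:ℂ)/2) • (1 + tensorPow N pX)
    rw [Matrix.conjTranspose_smul, Matrix.conjTranspose_add, Matrix.conjTranspose_one, X_conjT]
    norm_num
  have hBH : Bᴴ = B := by
    show (Matrix.single (zeros N) (zeros N) (1:ℂ)
        + Matrix.single (ones N) (ones N) (1:ℂ))ᴴ
      = Matrix.single (zeros N) (zeros N) (1:ℂ)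
        + Matrix.single (ones N) (ones N) (1:ℂ)
    ext b c
    simp [Matrix.conjTranspose_apply, Matrix.single, apply_ite (star : ℂ → ℂ), and_comm]
  have hM : C = ((1 - A) * (1 - B)) * ((1 - A) * (1 - B))ᴴ := by
    rw [Matrix.conjTranspose_mul, Matrix.conjTranspose_sub, Matrix.conjTranspose_sub,
      Matrix.conjTranspose_one, hAH, hBH, hfac, ← mul_assoc, mul_sub, mul_one,
      mul_sub C, mul_one, hCB, sub_zero, hCA, sub_zero]
  have hPSD : C.PosSemidef := hM ▸ Matrix.posSemidef_self_mul_conjTranspose _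
  constructor
  · have h1 : (2:ℂ) • W2ghz N - Wghz N = C := by
      show (2:ℂ) • (((3:ℂ)/4) • 1 - ((1:ℂ)/2) • (A + B)) - (((1:ℂ)/2) • 1 - P) = C
      rw [hC]; module
    rwa [h1]
  · exact hPSD
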